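/- Let p, q be real polynomials with real interlacing roots such that ω₁(z) = p(z) + i q(z) is in the Hermite-Biehler class, let A, B, C be real with A > 0 and C > 0. Then every zero of the polynomial (A z + B)·q(z) - C·p(z) is real. -/

import Mathlib

open Complex

lemma eval_map_conj (r : Polynomial ℝ) (w : ℂ) :
    (r.map (algebraMap ℝ ℂ)).eval ((starRingEnd ℂ) w)
      = (starRingEnd ℂ) ((r.map (algebraMap ℝ ℂ)).eval w) := by
  rw [Polynomial.eval_map, Polynomial.eval_map, ← Polynomial.aeval_def, ← Polynomial.aeval_def,
    ← Complex.conjAe_coe]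
  exact Polynomial.aeval_algHom_apply Complex.conjAe w r

theorem three_term_combination_zeros_real (p q : Polynomial ℝ)
    (hproots : ∀ z : ℂ, (p.map (algebraMap ℝ ℂ)).eval z = 0 → z.im = 0)
    (hqroots : ∀ z : ℂ, (q.map (algebraMap ℝ ℂ)).eval z = 0 → z.im = 0)
    (hHBzeros : ∀ z : ℂ,
      (p.map (algebraMap ℝ ℂ)).eval z + I * (q.map (algebraMap ℝ ℂ)).eval z = 0 → 0 < z.im)
    (hHBineq : ∀ z : ℂ, 0 < z.im →
      ‖(p.map (algebraMap ℝ ℂ)).eval z + I * (q.map (algebraMap ℝ ℂ)).eval z‖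
        < ‖starRingEnd ℂ
            ((p.map (algebraMap ℝ ℂ)).eval (starRingEnd ℂ z)
              + I * (q.map (algebraMap ℝ ℂ)).eval (starRingEnd ℂ z))‖)
    (A B C : ℝ) (hA : 0 < A) (hC : 0 < C)
    (z : ℂ)
    (hz : ((A : ℂ) * z + B) * (q.map (algebraMap ℝ ℂ)).eval z
        - (C : ℂ) * (p.map (algebraMap ℝ ℂ)).eval z = 0) :
    z.im = 0 := by
  by_contra him
  set P := (p.map (algebraMap ℝ ℂ)).eval z with hPdef
  set Q := (q.map (algebraMap ℝ ℂ)).eval z with hQdef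
  have hQne : Q ≠ 0 := fun h => him (hqroots z h)
  have hQpos : 0 < Complex.normSq Q := Complex.normSq_pos.2 hQne
  set w : ℂ := (A : ℂ) * z + B with hwdef
  have hCpos : (0:ℝ) < Complex.normSq (C : ℂ) := by
    rw [Complex.normSq_ofReal]; positivity
  have e1 : (w - I * C) * Q = (C : ℂ) * (P - I * Q) := by linear_combination hz
  have e2 : (w + I * C) * Q = (C : ℂ) * (P + I * Q) := by linear_combination hz
  rcases lt_or_gt_of_ne him with hneg | hpos
  · -- z.im < 0 : apply hHBineq at conj z
    have hcim : 0 < ((starRingEnd ℂ) z).im := by simpa using neg_pos.2 hneg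
    have h := hHBineq ((starRingEnd ℂ) z) hcim
    simp only [starRingEnd_self_apply] at h
    rw [eval_map_conj p, eval_map_conj q] at h
    have hL : (starRingEnd ℂ) P + I * (starRingEnd ℂ) Q = (starRingEnd ℂ) (P - I * Q) := by
      simp only [map_sub, map_mul, Complex.conj_I]; ring
    rw [hL, Complex.norm_conj, Complex.norm_conj] at h
    have h1 : Complex.normSq (P - I * Q) < Complex.normSq (P + I * Q) := by
      rw [Complex.normSq_eq_norm_sq, Complex.normSq_eq_norm_sq, sq, sq]
      exact mul_self_lt_mul_self (norm_nonneg _) h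
    have key : Complex.normSq (w - I * C) * Complex.normSq Q
        < Complex.normSq (w + I * C) * Complex.normSq Q := by
      rw [← Complex.normSq_mul, ← Complex.normSq_mul, e1, e2,
        Complex.normSq_mul, Complex.normSq_mul]
      exact mul_lt_mul_of_pos_left h1 hCpos
    have key2 := (mul_lt_mul_iff_left₀ hQpos).1 key
    have hwim : w.im = A * z.im := by simp [hwdef]
    simp only [Complex.normSq_apply, Complex.sub_re, Complex.sub_im, Complex.add_re,
      Complex.add_im, Complex.mul_re, Complex.mul_im, Complex.I_re, Complex.I_im,
      Complex.ofReal_re, Complex.ofReal_im] at key2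
    nlinarith [mul_pos hA (neg_pos.2 hneg), hC, key2, hwim]
  · -- z.im > 0
    have h := hHBineq z hpos
    rw [eval_map_conj p, eval_map_conj q] at h
    have hR : (starRingEnd ℂ) ((starRingEnd ℂ) P + I * (starRingEnd ℂ) Q)
        = P - I * Q := by
      simp only [map_add, map_mul, Complex.conj_I, Complex.conj_conj]; ring
    rw [hR] at h
    have h1 : Complex.normSq (P + I * Q) < Complex.normSq (P - I * Q) := by
      rw [Complex.normSq_eq_norm_sq, Complex.normSq_eq_norm_sq, sq, sq]
      exact mul_self_lt_mul_self (norm_nonneg _) h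
    have key : Complex.normSq (w + I * C) * Complex.normSq Q
        < Complex.normSq (w - I * C) * Complex.normSq Q := by
      rw [← Complex.normSq_mul, ← Complex.normSq_mul, e1, e2,
        Complex.normSq_mul, Complex.normSq_mul]
      exact mul_lt_mul_of_pos_left h1 hCpos
    have key2 := (mul_lt_mul_iff_left₀ hQpos).1 key
    have hwim : w.im = A * z.im := by simp [hwdef]
    simp only [Complex.normSq_apply, Complex.sub_re, Complex.sub_im, Complex.add_re,
      Complex.add_im, Complex.mul_re, Complex.mul_im, Complex.I_re, Complex.I_im,
      Complex.ofReal_re, Complex.ofReal_im] at key2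
    nlinarith [mul_pos hA hpos, hC, key2, hwim]
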